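/- Let q ≥ 2 be a real number, ε ∈ {−1, 0, 1}, and let z, u be nonnegative integers with u > 0. Writing (q)_m = ∏_{i=1}^m(1 − q^{−i}) and (1+q^{−k−(ε+1)/2−u}) interpreted with real exponent, we have Σ_{e=0}^∞ (−1)^e q^{−(ε+1)e/2 − ue}/(q)_e · Σ_{r=0}^{z} (−1)^r q^{r(r−1)/2 − ur + zr − r²} (q)_z/((q)_{z−r}(q)_r) = ∏_{k=0}^∞ (1 + q^{−k−(ε+1)/2−u})^{−1} · ∏_{k=0}^{z−1} (1 − q^{k−u}), and all series and products converge absolutely. -/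

import Mathlib

/-- The adjusted q-Pochhammer symbol `(q)_m = ∏_{i=1}^m (1 - q^{-i})`. -/
noncomputable def Stmt15.qpoch (q : ℝ) (m : ℕ) : ℝ :=
  ∏ i ∈ Finset.range m, (1 - q ^ (-(i + 1 : ℤ)))

namespace Stmt15Aux

open Stmt15 Finset Filter Topology

lemma zpow_eq (q : ℝ) (hq0 : q ≠ 0) (i : ℕ) :
    q ^ (-((i : ℤ) + 1)) = (q⁻¹) ^ (i + 1) := by
  rw [show (-((i : ℤ) + 1)) = -(((i + 1 : ℕ) : ℤ)) by push_cast; ring,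
    zpow_neg, zpow_natCast, inv_pow]

lemma qpoch_succ (q : ℝ) (n : ℕ) :
    qpoch q (n + 1) = qpoch q n * (1 - q ^ (-((n : ℤ) + 1))) := by
  rw [qpoch, Finset.prod_range_succ, qpoch]

lemma qpoch_zero (q : ℝ) : qpoch q 0 = 1 := by simp [qpoch]

section bounds

variable {q : ℝ} (hq : 2 ≤ q)

include hq

lemma fac_pos (i : ℕ) : 0 < q ^ (-((i : ℤ) + 1)) :=
  zpow_pos (by linarith) _

lemma fac_le (i : ℕ) : q ^ (-((i : ℤ) + 1)) ≤ (1 / 2 : ℝ) ^ (i + 1) := by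
  rw [zpow_eq q (by linarith) i]
  apply pow_le_pow_left₀ (by positivity)
  rw [show (1 / 2 : ℝ) = (2 : ℝ)⁻¹ by norm_num, ← one_div, ← one_div]
  exact one_div_le_one_div_of_le (by norm_num) hq

lemma fac_le_half (i : ℕ) : q ^ (-((i : ℤ) + 1)) ≤ 1 / 2 := by
  refine (fac_le hq i).trans ?_
  calc ((1:ℝ)/2) ^ (i+1) ≤ (1/2) ^ 1 :=
        pow_le_pow_of_le_one (by norm_num) (by norm_num) (by omega)
  _ = 1/2 := pow_one _

lemma qpoch_pos (n : ℕ) : 0 < qpoch q n := by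
  apply Finset.prod_pos
  intro i _
  have := fac_le_half hq i
  linarith

lemma qpoch_le_one (n : ℕ) : qpoch q n ≤ 1 := by
  apply Finset.prod_le_one
  · intro i _
    have := fac_le_half hq i
    linarith
  · intro i _
    have := fac_pos hq i
    linarith

lemma qpoch_ge_aux (n : ℕ) : 1/4 + (1/2 : ℝ) ^ (n + 2) ≤ qpoch q (n + 1) := by
  induction n with
  | zero =>
      rw [qpoch_succ, qpoch_zero]
      have h := fac_le_half hq 0
      norm_num at h ⊢
      linarith
  | succ n ih =>
      rw [qpoch_succ]
      have h1 := fac_le hq (n + 1)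
      have h2 := fac_pos hq (n + 1)
      have h3 : (0:ℝ) < (1/2 : ℝ) ^ (n + 2) := by positivity
      have h4 : ((1:ℝ)/2) ^ (n + 2) ≤ (1/2) ^ 2 :=
        pow_le_pow_of_le_one (by norm_num) (by norm_num) (by omega)
      have h5 : ((1:ℝ)/2) ^ (n + 1 + 1) = (1/2) ^ (n+2) := by ring_nf
      have h6 : ((1:ℝ)/2) ^ (n + 1 + 2) = (1/2) ^ (n+2) / 2 := by ring
      rw [h5] at h1
      rw [h6]
      have hp := qpoch_pos hq (n + 1)
      nlinarith [ih, h4, h2, h1]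

lemma qpoch_ge (n : ℕ) : 1/4 ≤ qpoch q n := by
  cases n with
  | zero => rw [qpoch_zero]; norm_num
  | succ n =>
      have := qpoch_ge_aux hq n
      have : (0:ℝ) < (1/2:ℝ)^(n+2) := by positivity
      linarith [qpoch_ge_aux hq n]

end bounds

/-! ### The Euler / q-exponential identity -/

section euler

variable {q : ℝ} (hq : 2 ≤ q)

include hq

lemma term_bound {v : ℝ} (hv : |v| ≤ 1/2) (e : ℕ) :
    |v ^ e / qpoch q e| ≤ 4 * (1/2 : ℝ) ^ e := by
  rw [abs_div, abs_pow, abs_of_pos (qpoch_pos hq e)]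
  have h1 : |v| ^ e / qpoch q e ≤ (1/2 : ℝ) ^ e / (1/4 : ℝ) :=
    div_le_div₀ (by positivity) (pow_le_pow_left₀ (abs_nonneg v) hv e)
      (by norm_num) (qpoch_ge hq e)
  calc |v| ^ e / qpoch q e ≤ (1/2 : ℝ) ^ e / (1/4 : ℝ) := h1
  _ = 4 * (1/2 : ℝ) ^ e := by ring

lemma summable_abs_term {v : ℝ} (hv : |v| ≤ 1/2) :
    Summable (fun e : ℕ => |v ^ e / qpoch q e|) := by
  refine Summable.of_nonneg_of_le (fun e => abs_nonneg _) (term_bound hq hv)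
    (Summable.mul_left 4 ?_)
  exact summable_geometric_of_lt_one (by norm_num) (by norm_num)

lemma summable_term {v : ℝ} (hv : |v| ≤ 1/2) :
    Summable (fun e : ℕ => v ^ e / qpoch q e) :=
  (summable_abs_term hq hv).of_abs

lemma key_frac {v : ℝ} (e : ℕ) :
    (q⁻¹ * v) ^ (e+1) / qpoch q (e+1)
      = v ^ (e+1) / qpoch q (e+1) - v ^ (e+1) / qpoch q e := by
  have hp1 : qpoch q (e+1) = qpoch q e * (1 - (q⁻¹)^(e+1)) := by
    rw [qpoch_succ, zpow_eq q (by linarith) e]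
  have hPe : qpoch q e ≠ 0 := ne_of_gt (qpoch_pos hq e)
  have hA : (q⁻¹ : ℝ)^(e+1) ≤ 1/2 := by
    rw [← zpow_eq q (by linarith) e]; exact fac_le_half hq e
  have hfac : (1 : ℝ) - (q⁻¹)^(e+1) ≠ 0 := by
    intro h; nlinarith
  rw [hp1, mul_pow]
  set A := (q⁻¹) ^ (e+1) with hAdef
  field_simp
  ring

lemma half_mul {v : ℝ} (hv : |v| ≤ 1/2) : |q⁻¹ * v| ≤ 1/2 := by
  have h : |q⁻¹| ≤ 1 := by
    rw [abs_of_nonneg (by positivity)]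
    rw [← one_div]
    calc (1:ℝ)/q ≤ 1/2 := one_div_le_one_div_of_le (by norm_num) hq
    _ ≤ 1 := by norm_num
  calc |q⁻¹ * v| = |q⁻¹| * |v| := abs_mul _ _
  _ ≤ 1 * (1/2) := mul_le_mul h hv (abs_nonneg _) (by norm_num)
  _ = 1/2 := by norm_num

lemma funeq {v : ℝ} (hv : |v| ≤ 1/2) :
    ∑' e : ℕ, (q⁻¹ * v) ^ e / qpoch q e
      = (1 - v) * ∑' e : ℕ, v ^ e / qpoch q e := by
  have hS : Summable (fun e : ℕ => v ^ e / qpoch q e) := summable_term hq hv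
  have hS1 : Summable (fun e : ℕ => v ^ (e+1) / qpoch q (e+1)) :=
    (summable_nat_add_iff (f := fun e : ℕ => v ^ e / qpoch q e) 1).mpr hS
  have hS2 : Summable (fun e : ℕ => v ^ (e+1) / qpoch q e) := by
    have := hS.mul_left v
    refine this.congr fun e => ?_
    rw [← mul_div_assoc, ← pow_succ']
  have hQ : Summable (fun e : ℕ => (q⁻¹ * v) ^ e / qpoch q e) :=
    summable_term hq (half_mul hq hv)
  have hT2 : ∑' e : ℕ, v ^ (e+1) / qpoch q e = v * ∑' e : ℕ, v ^ e / qpoch q e := by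
    rw [← tsum_mul_left]
    exact tsum_congr fun e => by rw [← mul_div_assoc, ← pow_succ']
  have h1 : ∑' e : ℕ, (q⁻¹ * v) ^ (e+1) / qpoch q (e+1)
      = (∑' e : ℕ, v ^ (e+1) / qpoch q (e+1)) - ∑' e : ℕ, v ^ (e+1) / qpoch q e := by
    rw [← Summable.tsum_sub hS1 hS2]
    exact tsum_congr fun e => key_frac hq e
  have hT2' : ∑' e : ℕ, v ^ (e+1) / qpoch q e
      = v * ((1:ℝ) + ∑' e : ℕ, v ^ (e+1) / qpoch q (e+1)) := by
    rw [hT2, Summable.tsum_eq_zero_add hS]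
    simp [qpoch_zero]
  rw [Summable.tsum_eq_zero_add hQ, Summable.tsum_eq_zero_add hS]
  simp only [pow_zero, qpoch_zero, div_one]
  rw [h1, hT2']
  ring

lemma qinv_pow_le_one (n : ℕ) : (q⁻¹ : ℝ) ^ n ≤ 1 := by
  apply pow_le_one₀ (by positivity)
  rw [← one_div]
  calc (1:ℝ)/q ≤ 1/2 := one_div_le_one_div_of_le (by norm_num) hq
  _ ≤ 1 := by norm_num

lemma half_mul_pow {v : ℝ} (hv : |v| ≤ 1/2) (n : ℕ) : |(q⁻¹) ^ n * v| ≤ 1/2 := by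
  rw [abs_mul, abs_of_nonneg (by positivity : (0:ℝ) ≤ (q⁻¹)^n)]
  calc (q⁻¹)^n * |v| ≤ 1 * (1/2) :=
    mul_le_mul (qinv_pow_le_one hq n) hv (abs_nonneg _) (by norm_num)
  _ = 1/2 := by norm_num

lemma iter {v : ℝ} (hv : |v| ≤ 1/2) (N : ℕ) :
    ∑' e : ℕ, ((q⁻¹) ^ N * v) ^ e / qpoch q e
      = (∑' e : ℕ, v ^ e / qpoch q e) * ∏ k ∈ Finset.range N, (1 - (q⁻¹) ^ k * v) := by
  induction N with
  | zero => simp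
  | succ n ih =>
      rw [Finset.prod_range_succ,
        show (q⁻¹ : ℝ) ^ (n+1) * v = q⁻¹ * ((q⁻¹) ^ n * v) by ring,
        funeq hq (half_mul_pow hq hv n), ih]
      ring

lemma near1 {w : ℝ} (hw : |w| ≤ 1/2) :
    |(∑' e : ℕ, w ^ e / qpoch q e) - 1| ≤ 8 * |w| := by
  have hS : Summable (fun e : ℕ => w ^ e / qpoch q e) := summable_term hq hw
  rw [Summable.tsum_eq_zero_add hS]
  simp only [pow_zero, qpoch_zero, div_one, add_sub_cancel_left]
  have hSa : Summable (fun e : ℕ => |w ^ (e+1) / qpoch q (e+1)|) :=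
    (summable_nat_add_iff (f := fun e : ℕ => |w ^ e / qpoch q e|) 1).mpr
      (summable_abs_term hq hw)
  have hgeo : Summable (fun e : ℕ => 8 * |w| * (1/2 : ℝ) ^ e) :=
    (summable_geometric_of_lt_one (by norm_num) (by norm_num)).mul_left _
  have hb : ∀ e : ℕ, |w ^ (e+1) / qpoch q (e+1)| ≤ 4 * |w| * (1/2:ℝ) ^ e := by
    intro e
    rw [abs_div, abs_pow, abs_of_pos (qpoch_pos hq (e+1))]
    have h1 : |w| ^ (e+1) / qpoch q (e+1) ≤ (|w| * (1/2:ℝ) ^ e) / (1/4 : ℝ) := by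
      apply div_le_div₀ (by positivity) ?_ (by norm_num) (qpoch_ge hq (e+1))
      calc |w| ^ (e+1) = |w| * |w| ^ e := by ring
      _ ≤ |w| * (1/2:ℝ)^e := by
          apply mul_le_mul_of_nonneg_left _ (abs_nonneg w)
          exact pow_le_pow_left₀ (abs_nonneg w) hw e
    calc |w| ^ (e+1) / qpoch q (e+1) ≤ (|w| * (1/2:ℝ) ^ e) / (1/4 : ℝ) := h1
    _ = 4 * |w| * (1/2:ℝ) ^ e := by ring
  calc |∑' e : ℕ, w ^ (e+1) / qpoch q (e+1)|
      ≤ ∑' e : ℕ, |w ^ (e+1) / qpoch q (e+1)| := by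
        have := norm_tsum_le_tsum_norm
          (f := fun e : ℕ => w ^ (e+1) / qpoch q (e+1))
          (by simpa only [Real.norm_eq_abs] using hSa)
        simpa only [Real.norm_eq_abs] using this
  _ ≤ ∑' e : ℕ, 4 * |w| * (1/2:ℝ) ^ e := by
        apply Summable.tsum_le_tsum hb hSa
        exact (summable_geometric_of_lt_one (by norm_num) (by norm_num)).mul_left _
  _ = 4 * |w| * ∑' e : ℕ, (1/2:ℝ) ^ e := tsum_mul_left
  _ = 8 * |w| := by
        rw [tsum_geometric_of_lt_one (by norm_num) (by norm_num)]
        ring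

omit hq in
lemma log_abs_le {x : ℝ} (hx : 1/2 ≤ x) : |Real.log x| ≤ 2 * |x - 1| := by
  rcases le_or_gt 1 x with h | h
  · rw [abs_of_nonneg (Real.log_nonneg h), abs_of_nonneg (by linarith)]
    have := Real.log_le_sub_one_of_pos (show (0:ℝ) < x by linarith)
    linarith
  · have hx0 : (0:ℝ) < x := by linarith
    have hlog : Real.log x < 0 := Real.log_neg hx0 h
    rw [abs_of_neg hlog, abs_of_neg (by linarith)]
    have h2 : Real.log x⁻¹ ≤ x⁻¹ - 1 :=
      Real.log_le_sub_one_of_pos (by positivity)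
    rw [Real.log_inv] at h2
    have h3 : x * x⁻¹ = 1 := mul_inv_cancel₀ (ne_of_gt hx0)
    nlinarith

lemma factor_ge {v : ℝ} (hv : |v| ≤ 1/2) (k : ℕ) :
    1/2 ≤ 1 - (q⁻¹ : ℝ) ^ k * v := by
  have h := half_mul_pow hq hv k
  have := abs_le.mp h
  linarith [this.2]

lemma multipliable_factors {v : ℝ} (hv : |v| ≤ 1/2) :
    Multipliable (fun k : ℕ => 1 - (q⁻¹ : ℝ) ^ k * v) := by
  have hpos : ∀ k : ℕ, (0:ℝ) < 1 - (q⁻¹) ^ k * v := fun k => by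
    linarith [factor_ge hq hv k]
  have hlog : Summable (fun k : ℕ => Real.log (1 - (q⁻¹) ^ k * v)) := by
    apply Summable.of_abs
    refine Summable.of_nonneg_of_le (fun k => abs_nonneg _)
      (fun k => ?_)
      ((summable_geometric_of_lt_one (r := 1/2) (by norm_num) (by norm_num)).mul_left
        (2 * |v|))
    calc |Real.log (1 - (q⁻¹) ^ k * v)| ≤ 2 * |(1 - (q⁻¹) ^ k * v) - 1| :=
          log_abs_le (factor_ge hq hv k)
    _ = 2 * ((q⁻¹)^k * |v|) := by
          rw [show (1 - (q⁻¹) ^ k * v) - 1 = -((q⁻¹)^k * v) by ring, abs_neg,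
            abs_mul, abs_of_nonneg (by positivity : (0:ℝ) ≤ (q⁻¹)^k)]
    _ ≤ 2 * |v| * (1/2:ℝ)^k := by
          rw [mul_assoc]
          apply mul_le_mul_of_nonneg_left _ (by norm_num)
          rw [mul_comm]
          apply mul_le_mul_of_nonneg_left _ (abs_nonneg v)
          apply pow_le_pow_left₀ (by positivity)
          rw [← one_div]
          exact one_div_le_one_div_of_le (by norm_num) hq
  exact Real.multipliable_of_summable_log hpos hlog

lemma euler_prod {v : ℝ} (hv : |v| ≤ 1/2) :
    (∑' e : ℕ, v ^ e / qpoch q e) * ∏' k : ℕ, (1 - (q⁻¹ : ℝ) ^ k * v) = 1 := by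
  have hM := multipliable_factors hq hv
  have ht1 : Tendsto (fun N : ℕ => ∏ k ∈ Finset.range N, (1 - (q⁻¹:ℝ) ^ k * v))
      atTop (𝓝 (∏' k : ℕ, (1 - (q⁻¹:ℝ) ^ k * v))) :=
    hM.hasProd.tendsto_prod_nat
  have ht2 := ht1.const_mul (∑' e : ℕ, v ^ e / qpoch q e)
  have heq : (fun N : ℕ => (∑' e : ℕ, v ^ e / qpoch q e) *
      ∏ k ∈ Finset.range N, (1 - (q⁻¹:ℝ) ^ k * v))
      = fun N : ℕ => ∑' e : ℕ, ((q⁻¹) ^ N * v) ^ e / qpoch q e :=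
    funext fun N => (iter hq hv N).symm
  rw [heq] at ht2
  have ht3 : Tendsto (fun N : ℕ => ∑' e : ℕ, ((q⁻¹:ℝ) ^ N * v) ^ e / qpoch q e)
      atTop (𝓝 1) := by
    rw [← tendsto_sub_nhds_zero_iff]
    refine squeeze_zero_norm (a := fun N : ℕ => 8 * (1/2:ℝ) ^ N) (fun N => ?_) ?_
    · rw [Real.norm_eq_abs]
      calc |(∑' e : ℕ, ((q⁻¹:ℝ) ^ N * v) ^ e / qpoch q e) - 1|
          ≤ 8 * |(q⁻¹:ℝ) ^ N * v| := near1 hq (half_mul_pow hq hv N)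
      _ ≤ 8 * (1/2:ℝ) ^ N := by
          apply mul_le_mul_of_nonneg_left _ (by norm_num)
          rw [abs_mul, abs_of_nonneg (by positivity : (0:ℝ) ≤ (q⁻¹)^N)]
          calc (q⁻¹:ℝ)^N * |v| ≤ (1/2:ℝ)^N * 1 := by
                apply mul_le_mul ?_ (le_trans hv (by norm_num)) (abs_nonneg v)
                  (by positivity)
                apply pow_le_pow_left₀ (by positivity)
                rw [← one_div]
                exact one_div_le_one_div_of_le (by norm_num) hq
          _ = (1/2:ℝ)^N := mul_one _
    · simpa using
        (tendsto_pow_atTop_nhds_zero_of_lt_one (by norm_num : (0:ℝ) ≤ 1/2)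
          (by norm_num)).const_mul (8:ℝ)
  exact tendsto_nhds_unique ht2 ht3

lemma euler_inv {v : ℝ} (hv : |v| ≤ 1/2) :
    Multipliable (fun k : ℕ => (1 - (q⁻¹ : ℝ) ^ k * v)⁻¹) ∧
    (∏' k : ℕ, (1 - (q⁻¹ : ℝ) ^ k * v)⁻¹) = ∑' e : ℕ, v ^ e / qpoch q e := by
  have hM := multipliable_factors hq hv
  have hkey := euler_prod hq hv
  set P := ∏' k : ℕ, (1 - (q⁻¹ : ℝ) ^ k * v) with hP
  have hPne : P ≠ 0 := by
    intro h
    rw [h, mul_zero] at hkey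
    norm_num at hkey
  have h1 : HasProd (fun k : ℕ => 1 - (q⁻¹ : ℝ) ^ k * v) P := hM.hasProd
  have h2 : HasProd (fun k : ℕ => (1 - (q⁻¹ : ℝ) ^ k * v)⁻¹) P⁻¹ := by
    have := Filter.Tendsto.inv₀ h1 hPne
    simpa [HasProd, Finset.prod_inv_distrib] using this
  refine ⟨h2.multipliable, ?_⟩
  rw [h2.tprod_eq]
  exact (eq_inv_of_mul_eq_one_left hkey).symm

end euler


/-! ### The finite q-binomial identity -/

noncomputable def B (q : ℝ) : ℕ → ℕ → ℝ
  | _, 0 => 1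
  | 0, _ + 1 => 0
  | z + 1, r + 1 => q ^ (-((r : ℤ) + 1)) * B q z (r + 1) + B q z r

lemma B_base (q : ℝ) : ∀ z, B q z 0 = 1
  | 0 => rfl
  | _ + 1 => rfl

lemma B_succ (q : ℝ) (z r : ℕ) :
    B q (z+1) (r+1) = q ^ (-((r : ℤ) + 1)) * B q z (r+1) + B q z r := rfl

lemma B_of_lt (q : ℝ) : ∀ z r, z < r → B q z r = 0
  | 0, _+1, _ => rfl
  | z+1, r+1, h => by
      rw [B_succ, B_of_lt q z (r+1) (by omega), B_of_lt q z r (by omega)]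
      ring

lemma B_mul (q : ℝ) (hq0 : q ≠ 0) : ∀ z r : ℕ, r ≤ z →
    B q z r * (qpoch q (z - r) * qpoch q r) = qpoch q z := by
  intro z
  induction z with
  | zero =>
      intro r hr
      interval_cases r
      simp [B_base, qpoch_zero]
  | succ z ih =>
      intro r hr
      cases r with
      | zero => simp [B_base, qpoch_zero]
      | succ s =>
          have hs : s ≤ z := by omega
          rcases eq_or_lt_of_le hs with he | hlt
          · subst he
            rw [B_succ, B_of_lt q s (s+1) (by omega)]
            have ihz := ih s le_rfl
            rw [Nat.sub_self, qpoch_zero] at ihz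
            rw [Nat.sub_self, qpoch_zero, qpoch_succ]
            linear_combination (1 - q ^ (-((s:ℤ)+1))) * ihz
          · have ih1 := ih (s+1) hlt
            have ih2 := ih s hs
            set t := z - (s+1) with htdef
            have ht1 : z - s = t + 1 := by omega
            have ht2 : z + 1 - (s+1) = t + 1 := by omega
            rw [ht1] at ih2
            rw [B_succ, ht2]
            rw [qpoch_succ q z, qpoch_succ q t, qpoch_succ q s]
            rw [qpoch_succ q s] at ih1
            rw [qpoch_succ q t] at ih2
            have hqq : q ^ (-((t:ℤ)+1)) * q ^ (-((s:ℤ)+1)) = q ^ (-((z:ℤ)+1)) := by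
              rw [← zpow_add₀ hq0]
              congr 1
              omega
            linear_combination (q ^ (-((s:ℤ)+1)) * (1 - q ^ (-((t:ℤ)+1)))) * ih1
              + (1 - q ^ (-((s:ℤ)+1))) * ih2 - qpoch q z * hqq

def E (z r u : ℤ) : ℤ := r * (r - 1) / 2 - u * r + z * r - r ^ 2

lemma E_zero (z u : ℤ) : E z 0 u = 0 := by simp [E]

lemma E_succ (z r u : ℤ) : E (z+1) (r+1) u = E z (r+1) u + (r+1) := by
  unfold E; ring

lemma E_shift (z r u : ℤ) : E (z+1) (r+1) u = E z r u + (z - u) := by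
  unfold E
  rw [show (r+1) * ((r+1) - 1) = r * (r-1) + r * 2 by ring,
    Int.add_mul_ediv_right _ _ (by norm_num : (2:ℤ) ≠ 0)]
  ring

lemma sum_B (q : ℝ) (hq0 : q ≠ 0) (u : ℕ) : ∀ z : ℕ,
    ∑ r ∈ Finset.range (z+1), ((-1:ℝ)^r * q ^ E (z:ℤ) (r:ℤ) (u:ℤ) * B q z r)
      = ∏ k ∈ Finset.range z, (1 - q ^ ((k:ℤ) - (u:ℤ))) := by
  intro z
  induction z with
  | zero => simp [B_base, E_zero]
  | succ z ih =>
      set g : ℕ → ℝ := fun r => (-1:ℝ)^r * q ^ E (z:ℤ) (r:ℤ) (u:ℤ) * B q z r with hg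
      have key : ∀ i : ℕ,
          (-1:ℝ)^(i+1) * q ^ E ((z+1 : ℕ):ℤ) ((i+1 : ℕ):ℤ) (u:ℤ) * B q (z+1) (i+1)
            = g (i+1) - q ^ ((z:ℤ) - (u:ℤ)) * g i := by
        intro i
        have e1 : E ((z+1 : ℕ):ℤ) ((i+1 : ℕ):ℤ) (u:ℤ)
            = E (z:ℤ) ((i+1 : ℕ):ℤ) (u:ℤ) + ((i:ℤ)+1) := by
          push_cast
          exact E_succ (z:ℤ) (i:ℤ) (u:ℤ)
        have e2 : E ((z+1 : ℕ):ℤ) ((i+1 : ℕ):ℤ) (u:ℤ)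
            = E (z:ℤ) (i:ℤ) (u:ℤ) + ((z:ℤ) - (u:ℤ)) := by
          push_cast
          exact E_shift (z:ℤ) (i:ℤ) (u:ℤ)
        have q1 : q ^ E ((z+1 : ℕ):ℤ) ((i+1 : ℕ):ℤ) (u:ℤ) * q ^ (-((i:ℤ)+1))
            = q ^ E (z:ℤ) ((i+1 : ℕ):ℤ) (u:ℤ) := by
          rw [← zpow_add₀ hq0, e1]
          congr 1
          ring
        have q2 : q ^ E ((z+1 : ℕ):ℤ) ((i+1 : ℕ):ℤ) (u:ℤ)
            = q ^ E (z:ℤ) (i:ℤ) (u:ℤ) * q ^ ((z:ℤ) - (u:ℤ)) := by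
          rw [← zpow_add₀ hq0, e2]
        rw [B_succ, hg]
        simp only []
        rw [pow_succ]
        linear_combination (-(-1:ℝ)^i * B q z (i+1)) * q1 + (-(-1:ℝ)^i * B q z i) * q2
      rw [Finset.sum_range_succ' _ (z+1)]
      have hf0 : (-1:ℝ)^0 * q ^ E ((z+1 : ℕ):ℤ) ((0 : ℕ):ℤ) (u:ℤ) * B q (z+1) 0 = 1 := by
        rw [B_base]
        norm_num [E_zero]
      rw [hf0]
      have hsum1 : ∑ i ∈ Finset.range (z+1),
          ((-1:ℝ)^(i+1) * q ^ E ((z+1 : ℕ):ℤ) ((i+1 : ℕ):ℤ) (u:ℤ) * B q (z+1) (i+1))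
          = ∑ i ∈ Finset.range (z+1), (g (i+1) - q ^ ((z:ℤ) - (u:ℤ)) * g i) :=
        Finset.sum_congr rfl fun i _ => key i
      rw [hsum1, Finset.sum_sub_distrib, ← Finset.mul_sum]
      have hshift : ∑ i ∈ Finset.range (z+1), g (i+1)
          = ∑ r ∈ Finset.range (z+2), g r - g 0 := by
        rw [Finset.sum_range_succ' g (z+1)]
        ring
      have hg0 : g 0 = 1 := by
        rw [hg]
        simp only []
        rw [B_base]
        norm_num [E_zero]
      have htop : ∑ r ∈ Finset.range (z+2), g r = ∑ r ∈ Finset.range (z+1), g r := by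
        rw [Finset.sum_range_succ]
        have : g (z+1) = 0 := by
          rw [hg]
          simp only []
          rw [B_of_lt q z (z+1) (by omega)]
          ring
        rw [this, add_zero]
      have hS : ∑ r ∈ Finset.range (z+1), g r
          = ∏ k ∈ Finset.range z, (1 - q ^ ((k:ℤ) - (u:ℤ))) := ih
      rw [hshift, htop, hg0, hS, Finset.prod_range_succ]
      ring

end Stmt15Aux

open Stmt15 in
/-- For real `q ≥ 2`, `ε ∈ {−1,0,1}`, and nonnegative integers `z, u` with `u > 0`:
`(∑_{e=0}^∞ (−1)^e q^{−(ε+1)e/2 − ue}/(q)_e) ·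
 (∑_{r=0}^{z} (−1)^r q^{r(r−1)/2 − ur + zr − r²} (q)_z/((q)_{z−r}(q)_r))
 = ∏_{k=0}^∞ (1 + q^{−k−(ε+1)/2−u})^{−1} · ∏_{k=0}^{z−1} (1 − q^{k−u})`,
with the series absolutely convergent and the infinite product convergent. -/
theorem stmt_15 (q : ℝ) (hq : 2 ≤ q) (ε : ℤ) (hε : ε = -1 ∨ ε = 0 ∨ ε = 1)
    (z u : ℕ) (hu : 0 < u) :
    (Summable fun e : ℕ =>
      |(-1 : ℝ) ^ e * q ^ (-(((ε : ℝ) + 1) / 2) * (e : ℝ) - (u : ℝ) * (e : ℝ)) /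
        qpoch q e|) ∧
    (Multipliable fun k : ℕ =>
      (1 + q ^ (-(k : ℝ) - ((ε : ℝ) + 1) / 2 - (u : ℝ)))⁻¹) ∧
    (∑' e : ℕ,
        (-1 : ℝ) ^ e * q ^ (-(((ε : ℝ) + 1) / 2) * (e : ℝ) - (u : ℝ) * (e : ℝ)) /
          qpoch q e) *
      (∑ r ∈ Finset.range (z + 1),
        (-1 : ℝ) ^ r *
          q ^ ((r : ℤ) * ((r : ℤ) - 1) / 2 - (u : ℤ) * (r : ℤ) + (z : ℤ) * (r : ℤ)
                - (r : ℤ) ^ 2) *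
          qpoch q z / (qpoch q (z - r) * qpoch q r))
    = (∏' k : ℕ, (1 + q ^ (-(k : ℝ) - ((ε : ℝ) + 1) / 2 - (u : ℝ)))⁻¹) *
      ∏ k ∈ Finset.range z, (1 - q ^ ((k : ℤ) - (u : ℤ))) := by
  have hq0 : (0:ℝ) < q := by linarith
  have hqne : q ≠ 0 := by linarith
  set a : ℝ := ((ε : ℝ) + 1) / 2 + u with ha
  have hu1 : (1:ℝ) ≤ u := by exact_mod_cast hu
  have ha1 : 1 ≤ a := by
    rcases hε with h | h | h <;> rw [ha, h] <;> push_cast <;> linarith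
  set v : ℝ := -(q ^ (-a)) with hv
  have hVpos : (0:ℝ) < q ^ (-a) := Real.rpow_pos_of_pos hq0 _
  have hVle : q ^ (-a) ≤ 1/2 := by
    have h1 : q ^ (-a) ≤ q ^ (-1:ℝ) :=
      Real.rpow_le_rpow_of_exponent_le (by linarith) (by linarith)
    rw [Real.rpow_neg_one] at h1
    have h2 : q⁻¹ ≤ 1/2 := by
      rw [← one_div]
      exact one_div_le_one_div_of_le (by norm_num) hq
    linarith
  have hvabs : |v| ≤ 1/2 := by
    rw [hv, abs_neg, abs_of_pos hVpos]
    exact hVle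
  have hterm : ∀ e : ℕ,
      (-1:ℝ)^e * q ^ (-(((ε : ℝ) + 1) / 2) * (e : ℝ) - (u : ℝ) * (e : ℝ)) = v ^ e := by
    intro e
    have hexp : (-(((ε : ℝ) + 1) / 2) * (e : ℝ) - (u : ℝ) * (e : ℝ)) = (-a) * (e : ℝ) := by
      rw [ha]; ring
    rw [hexp, Real.rpow_mul hq0.le, Real.rpow_natCast, hv, neg_pow (q ^ (-a)) e]
  have hfac : ∀ k : ℕ,
      1 + q ^ (-(k : ℝ) - ((ε : ℝ) + 1) / 2 - (u : ℝ)) = 1 - (q⁻¹)^k * v := by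
    intro k
    have hexp : (-(k : ℝ) - ((ε : ℝ) + 1) / 2 - (u : ℝ)) = (-(k:ℝ)) + (-a) := by
      rw [ha]; ring
    rw [hexp, Real.rpow_add hq0, Real.rpow_neg hq0.le, Real.rpow_natCast, ← inv_pow, hv]
    ring
  obtain ⟨hMinv, hProdinv⟩ := Stmt15Aux.euler_inv hq hvabs
  refine ⟨?_, ?_, ?_⟩
  · refine (Stmt15Aux.summable_abs_term hq hvabs).congr fun e => ?_
    rw [hterm e]
  · refine hMinv.congr fun k => ?_
    rw [hfac k]
  · have hsum : (∑' e : ℕ,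
        (-1:ℝ)^e * q ^ (-(((ε : ℝ) + 1) / 2) * (e : ℝ) - (u : ℝ) * (e : ℝ)) / qpoch q e)
        = ∑' e : ℕ, v ^ e / qpoch q e := tsum_congr fun e => by rw [hterm e]
    have hprod : (∏' k : ℕ, (1 + q ^ (-(k : ℝ) - ((ε : ℝ) + 1) / 2 - (u : ℝ)))⁻¹)
        = ∏' k : ℕ, (1 - (q⁻¹)^k * v)⁻¹ := tprod_congr fun k => by rw [hfac k]
    have hfin : (∑ r ∈ Finset.range (z + 1),
        (-1:ℝ)^r * q ^ ((r : ℤ) * ((r : ℤ) - 1) / 2 - (u : ℤ) * (r : ℤ) + (z : ℤ) * (r : ℤ)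
            - (r : ℤ) ^ 2) * qpoch q z / (qpoch q (z - r) * qpoch q r))
        = ∏ k ∈ Finset.range z, (1 - q ^ ((k : ℤ) - (u : ℤ))) := by
      rw [← Stmt15Aux.sum_B q hqne u z]
      refine Finset.sum_congr rfl fun r hr => ?_
      have hrz : r ≤ z := Nat.lt_succ_iff.mp (Finset.mem_range.mp hr)
      have hne1 : qpoch q (z - r) ≠ 0 := ne_of_gt (Stmt15Aux.qpoch_pos hq _)
      have hne2 : qpoch q r ≠ 0 := ne_of_gt (Stmt15Aux.qpoch_pos hq _)
      have hB := Stmt15Aux.B_mul q hqne z r hrz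
      simp only [Stmt15Aux.E]
      rw [div_eq_iff (mul_ne_zero hne1 hne2)]
      linear_combination (-((-1:ℝ)^r * q ^ ((r : ℤ) * ((r : ℤ) - 1) / 2 - (u : ℤ) * (r : ℤ)
        + (z : ℤ) * (r : ℤ) - (r : ℤ) ^ 2))) * hB
    rw [hsum, hfin, hprod, hProdinv]
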